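/- Let M = (W, ≤, N, V) be a coherent intuitionistic neighbourhood model, s ∈ W, and M_s^{ur} its unravelling from s. Then for all unravelling paths w⃗ ∈ W_s^{ur} and all L-formulas φ: M_s^{ur}, w⃗ ⊩ φ if and only if M, last(w⃗) ⊩ φ. -/

import Mathlib

/-
Common formalisation of the syntax and semantics of the intuitionistic
monotone modal logic IM, its generalised Hilbert calculi, intuitionistic
neighbourhood models, IFOM-structures, and related constructions.
-/

namespace IMPaper

/-- Formulas of the monotone modal language L. -/
inductive Formula : Type
  | prop : ℕ → Formula
  | bot  : Formula
  | and  : Formula → Formula → Formula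
  | or   : Formula → Formula → Formula
  | imp  : Formula → Formula → Formula
  | box  : Formula → Formula
  | dia  : Formula → Formula
deriving DecidableEq

/-- Negation: ¬φ abbreviates φ → ⊥. -/
def Formula.neg (φ : Formula) : Formula := φ.imp .bot

/-- Top: ⊤ abbreviates ⊥ → ⊥. -/
def Formula.top : Formula := Formula.bot.imp .bot

/-- Substitution of formulas for proposition letters. -/
def Formula.subst (σ : ℕ → Formula) : Formula → Formula
  | .prop i   => σ i
  | .bot      => .bot
  | .and φ ψ  => .and (φ.subst σ) (ψ.subst σ)
  | .or φ ψ   => .or (φ.subst σ) (ψ.subst σ)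
  | .imp φ ψ  => .imp (φ.subst σ) (ψ.subst σ)
  | .box φ    => .box (φ.subst σ)
  | .dia φ    => .dia (φ.subst σ)

private def pp0 : Formula := .prop 0
private def pp1 : Formula := .prop 1
private def pp2 : Formula := .prop 2

/-- A standard axiomatisation of intuitionistic propositional logic. -/
def IpcAx : Set Formula :=
  { Formula.imp pp0 (.imp pp1 pp0),
    Formula.imp (.imp pp0 (.imp pp1 pp2)) (.imp (.imp pp0 pp1) (.imp pp0 pp2)),
    Formula.imp (.and pp0 pp1) pp0,
    Formula.imp (.and pp0 pp1) pp1,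
    Formula.imp pp0 (.imp pp1 (.and pp0 pp1)),
    Formula.imp pp0 (.or pp0 pp1),
    Formula.imp pp1 (.or pp0 pp1),
    Formula.imp (.imp pp0 pp2) (.imp (.imp pp1 pp2) (.imp (.or pp0 pp1) pp2)),
    Formula.imp .bot pp0 }

/-- All substitution instances of a set of formulas. -/
def Instances (Ax : Set Formula) : Set Formula :=
  {φ | ∃ ψ ∈ Ax, ∃ σ, φ = ψ.subst σ}

/-- 𝒜x: all substitution instances of Ax together with all substitution
instances of the axioms of intuitionistic propositional logic. -/
def ScrAx (Ax : Set Formula) : Set Formula := Instances Ax ∪ Instances IpcAx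

/-- The generalised Hilbert calculus GHC(Ax). -/
inductive GHC (Ax : Set Formula) : Set Formula → Formula → Prop
  | el {Γ : Set Formula} {φ : Formula} : φ ∈ Γ → GHC Ax Γ φ
  | ax {Γ : Set Formula} {φ : Formula} : φ ∈ ScrAx Ax → GHC Ax Γ φ
  | mp {Γ : Set Formula} {φ ψ : Formula} :
      GHC Ax Γ φ → GHC Ax Γ (φ.imp ψ) → GHC Ax Γ ψ
  | monBox {Γ : Set Formula} {φ ψ : Formula} :
      GHC Ax ∅ (φ.imp ψ) → GHC Ax Γ ((Formula.box φ).imp (Formula.box ψ))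
  | monDia {Γ : Set Formula} {φ ψ : Formula} :
      GHC Ax ∅ (φ.imp ψ) → GHC Ax Γ ((Formula.dia φ).imp (Formula.dia ψ))

/-- The axioms (neg_a) and (I_◇) of the calculus IMCalc. -/
def IMAx : Set Formula :=
  { Formula.imp ((Formula.box pp0).and (Formula.dia pp0.neg)) .bot,
    Formula.imp ((Formula.box Formula.top).imp (Formula.dia pp0)) (Formula.dia pp0) }

/-- Derivability in the calculus IMCalc = GHC({(□p ∧ ◇¬p) → ⊥, (□⊤ → ◇p) → ◇p}). -/
def IMC : Set Formula → Formula → Prop := GHC IMAx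

/-- An intuitionistic neighbourhood: a partial function W ⇀ 𝒫(W), encoded as a
domain together with a (total) value function whose values matter on the domain. -/
structure Nbhd (W : Type) where
  dom : Set W
  val : W → Set W

/-- The data of an intuitionistic neighbourhood model. -/
structure INStruct (W : Type) where
  le : W → W → Prop
  N : Set (Nbhd W)
  V : ℕ → Set W

variable {W W' : Type}

/-- A set is upward closed w.r.t. the order of the structure. -/
def INStruct.Up (M : INStruct W) (s : Set W) : Prop :=
  ∀ ⦃w v : W⦄, M.le w v → w ∈ s → v ∈ s

/-- `M` is an intuitionistic neighbourhood model: the order is a partial order,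
the domain of every neighbourhood is upward closed, and the valuation assigns
upward closed sets to proposition letters. -/
def INStruct.IsModel (M : INStruct W) : Prop :=
  IsPartialOrder W M.le ∧ (∀ a ∈ M.N, M.Up a.dom) ∧ ∀ i, M.Up (M.V i)

/-- Truth of a formula at a world of an intuitionistic neighbourhood model. -/
def INStruct.sat (M : INStruct W) : Formula → W → Prop
  | .prop i, w  => w ∈ M.V i
  | .bot, _     => False
  | .and φ ψ, w => M.sat φ w ∧ M.sat ψ w
  | .or φ ψ, w  => M.sat φ w ∨ M.sat ψ w
  | .imp φ ψ, w => ∀ v, M.le w v → M.sat φ v → M.sat ψ v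
  | .box φ, w   => ∃ a ∈ M.N, w ∈ a.dom ∧
      ∀ w', M.le w w' → ∀ v ∈ a.val w', M.sat φ v
  | .dia φ, w   => ∀ w', M.le w w' → ∀ a ∈ M.N, w' ∈ a.dom →
      ∃ v ∈ a.val w', M.sat φ v

/-- Semantic consequence over the class of all intuitionistic neighbourhood models. -/
def INConseq (Γ : Set Formula) (φ : Formula) : Prop :=
  ∀ (W : Type) (M : INStruct W), M.IsModel →
    ∀ w : W, (∀ ψ ∈ Γ, M.sat ψ w) → M.sat φ w

/-- A coherent intuitionistic neighbourhood: conditions (N1) and (N2). -/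
def INStruct.CoherentNbhd (M : INStruct W) (a : Nbhd W) : Prop :=
  (∀ ⦃w w' : W⦄, M.le w w' → w ∈ a.dom → ∀ v ∈ a.val w, ∃ v' ∈ a.val w', M.le v v') ∧
  (∀ ⦃w : W⦄, w ∈ a.dom → ∀ v ∈ a.val w, ∀ v', M.le v v' →
      ∃ w', M.le w w' ∧ v' ∈ a.val w')

/-- A model is coherent if all its intuitionistic neighbourhoods are coherent. -/
def INStruct.Coherent (M : INStruct W) : Prop := ∀ a ∈ M.N, M.CoherentNbhd a

/-- Semantic consequence over the class of coherent intuitionistic neighbourhood models. -/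
def CohConseq (Γ : Set Formula) (φ : Formula) : Prop :=
  ∀ (W : Type) (M : INStruct W), M.IsModel → M.Coherent →
    ∀ w : W, (∀ ψ ∈ Γ, M.sat ψ w) → M.sat φ w

/-- The relation R: w R v iff v ∈ a(w) for some neighbourhood a of w. -/
def INStruct.R (M : INStruct W) (w v : W) : Prop :=
  ∃ a ∈ M.N, w ∈ a.dom ∧ v ∈ a.val w

/-- R~-Cartesian: w ≤~ v R~ w implies w = v (with ~ the equivalence closures). -/
def INStruct.RCartesian (M : INStruct W) : Prop :=
  ∀ w v, Relation.EqvGen M.le w v → Relation.EqvGen M.R v w → w = v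

/-- N-Cartesian: w R~ v and w, v ∈ dom(a) imply a(w) = a(v). -/
def INStruct.NCartesian (M : INStruct W) : Prop :=
  ∀ a ∈ M.N, ∀ w v, Relation.EqvGen M.R w v → w ∈ a.dom → v ∈ a.dom →
    a.val w = a.val v

/-- Cartesian: both R~-Cartesian and N-Cartesian. -/
def INStruct.Cartesian (M : INStruct W) : Prop := M.RCartesian ∧ M.NCartesian

/-- Isomorphism of intuitionistic neighbourhood structures. -/
def Isomorphic (M : INStruct W) (M' : INStruct W') : Prop :=
  ∃ (α : W → W') (ν : Nbhd W → Nbhd W'),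
    Function.Bijective α ∧ Set.BijOn ν M.N M'.N ∧
    (∀ w v, M.le w v ↔ M'.le (α w) (α v)) ∧
    (∀ a ∈ M.N, ∀ w, w ∈ a.dom ↔ α w ∈ (ν a).dom) ∧
    (∀ a ∈ M.N, ∀ u ∈ a.dom, ∀ w, w ∈ a.val u ↔ α w ∈ (ν a).val (α u)) ∧
    (∀ i w, w ∈ M.V i ↔ α w ∈ M'.V i)

end IMPaper
namespace IMPaper

variable {W : Type}

/-- A neighbourhood path starting at a given world: a list of steps (a, y) such
that each step is taken with a neighbourhood a ∈ N from the current world x,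
with x ∈ dom(a) and y ∈ a(x). -/
def NbdChain (M : INStruct W) : W → List (Nbhd W × W) → Prop
  | _, [] => True
  | x, (a, y) :: rest => a ∈ M.N ∧ x ∈ a.dom ∧ y ∈ a.val x ∧ NbdChain M y rest

/-- An unravelling path starting at s: an order path (a nonempty ≤-chain starting
at s) followed by a neighbourhood path. -/
structure UrPath (M : INStruct W) (s : W) where
  ord : List W
  nbd : List (Nbhd W × W)
  ord_ne : ord ≠ []
  ord_head : ord.head? = some s
  ord_chain : ord.Chain' M.le
  nbd_chain : NbdChain M (ord.getLastD s) nbd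

/-- The last world of the order part of an unravelling path. -/
def UrPath.mid {M : INStruct W} {s : W} (p : UrPath M s) : W := p.ord.getLastD s

/-- The list of worlds w_0, …, w_n of the neighbourhood part of an unravelling path. -/
def UrPath.wlist {M : INStruct W} {s : W} (p : UrPath M s) : List W :=
  p.mid :: p.nbd.map Prod.snd

/-- The last world of an unravelling path. -/
def UrPath.last {M : INStruct W} {s : W} (p : UrPath M s) : W := p.wlist.getLastD s

/-- The order ≤^ur on unravelling paths: the neighbourhood labels coincide, and
there are order paths t_0, …, t_n, all of the same length, connecting the
neighbourhood-part worlds of p pointwise to those of q, with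
q_ord = p_ord ⌢ t_0. -/
def urLe (M : INStruct W) (s : W) (p q : UrPath M s) : Prop :=
  p.nbd.map Prod.fst = q.nbd.map Prod.fst ∧
  ∃ ts : List (List W),
    ts.length = p.nbd.length + 1 ∧
    (∀ t ∈ ts, t ≠ [] ∧ t.Chain' M.le) ∧
    (∀ t ∈ ts, ∀ t' ∈ ts, t.length = t'.length) ∧
    (∀ j : ℕ, (ts.getD j []).head? = p.wlist[j]? ∧
              (ts.getD j []).getLast? = q.wlist[j]?) ∧
    q.ord = p.ord ++ (ts.headI).tail

/-- The intuitionistic neighbourhood a_{w⃗} on unravelling paths: its domain is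
the ≤^ur-upset of w⃗, and a_{w⃗}(v⃗) = { v⃗ : a : x  |  x ∈ a(last v⃗) }. -/
def urNbhd (M : INStruct W) (s : W) (p : UrPath M s) (a : Nbhd W) :
    Nbhd (UrPath M s) where
  dom := {q | urLe M s p q}
  val := fun q => {r | r.ord = q.ord ∧ ∃ x ∈ a.val q.last, r.nbd = q.nbd ++ [(a, x)]}

/-- The unravelling M_s^ur of M from s. -/
def urStruct (M : INStruct W) (s : W) : INStruct (UrPath M s) where
  le := urLe M s
  N := {b | ∃ p : UrPath M s, ∃ a ∈ M.N, p.last ∈ a.dom ∧ b = urNbhd M s p a}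
  V := fun i => {p | p.last ∈ M.V i}

end IMPaper
namespace IMPaper


variable {W : Type}

section Aux

variable (M : INStruct W) (s : W)

private lemma mrefl (hM : M.IsModel) (x : W) : M.le x x := hM.1.refl x

private lemma mtrans (hM : M.IsModel) {x y z : W} (h1 : M.le x y) (h2 : M.le y z) :
    M.le x z := hM.1.trans x y z h1 h2

private lemma getLast?_cons_getLastD (a : W) (l : List W) (d : W) :
    (a :: l).getLast? = some ((a :: l).getLastD d) := by
  rw [List.getLastD_eq_getLast?]
  cases h : (a :: l).getLast? with
  | none => exact absurd (List.getLast?_eq_none_iff.mp h) (List.cons_ne_nil a l)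
  | some y => rfl

private lemma nbdChain_concat (l : List (Nbhd W × W)) (m : W) (a : Nbhd W) (x : W) :
    NbdChain M m (l ++ [(a, x)]) ↔
      NbdChain M m l ∧ a ∈ M.N ∧ (l.map Prod.snd).getLastD m ∈ a.dom ∧
        x ∈ a.val ((l.map Prod.snd).getLastD m) := by
  induction l generalizing m with
  | nil => simp [NbdChain]
  | cons hd tl ih =>
    obtain ⟨b, y⟩ := hd
    simp only [List.cons_append, List.append_eq, NbdChain, List.map_cons, List.getLastD_cons, ih y]
    tauto

private lemma chain'_le_head_last (hM : M.IsModel) :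
    ∀ (t : List W) (x y : W), t.Chain' M.le → t.head? = some x → t.getLast? = some y →
      M.le x y
  | [], x, y => by simp
  | [z], x, y => by
    intro _ hx hy
    simp only [List.head?_cons, Option.some.injEq] at hx
    simp only [List.getLast?_singleton, Option.some.injEq] at hy
    subst hx; subst hy
    exact mrefl M hM _
  | z :: w :: t, x, y => by
    intro hc hx hy
    simp only [List.head?_cons, Option.some.injEq] at hx
    subst hx
    rcases List.isChain_cons_cons.mp hc with ⟨h1, h2⟩
    refine mtrans M hM h1 (chain'_le_head_last hM (w :: t) w y h2 rfl ?_)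
    simpa using hy

private lemma wlist_length (p : UrPath M s) : p.wlist.length = p.nbd.length + 1 := by
  simp [UrPath.wlist]

private lemma wlist_getLast? (p : UrPath M s) : p.wlist.getLast? = some p.last :=
  getLast?_cons_getLastD p.mid (p.nbd.map Prod.snd) s

private lemma wlist_last (p : UrPath M s) : p.wlist[p.nbd.length]? = some p.last := by
  have h1 := List.getLast?_eq_getElem? (l := p.wlist)
  rw [wlist_getLast? M s p, wlist_length M s p] at h1
  simpa using h1.symm

private lemma mem_zipWith' {α β γ : Type*} {f : α → β → γ} {l : List α} {m : List β} {x : γ}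
    (h : x ∈ List.zipWith f l m) : ∃ a b, x = f a b := by
  induction l generalizing m with
  | nil => simp at h
  | cons a l ih =>
    cases m with
    | nil => simp at h
    | cons b m =>
      simp only [List.zipWith_cons_cons, List.mem_cons] at h
      rcases h with rfl | h
      · exact ⟨a, b, rfl⟩
      · exact ih h

private lemma last_eq (p : UrPath M s) :
    p.last = (p.nbd.map Prod.snd).getLastD p.mid := by
  show p.wlist.getLastD s = _
  rw [show p.wlist = p.mid :: p.nbd.map Prod.snd from rfl, List.getLastD_cons]

private lemma nbd_length_eq {p q : UrPath M s} (h : urLe M s p q) :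
    q.nbd.length = p.nbd.length := by
  have := congrArg List.length h.1
  simpa using this.symm

private lemma urLe_last_le (hM : M.IsModel) {p q : UrPath M s} (h : urLe M s p q) :
    M.le p.last q.last := by
  obtain ⟨hfst, ts, hlen, hne, _, hheads, _⟩ := h
  have hq : q.nbd.length = p.nbd.length := by
    have := congrArg List.length hfst
    simpa using this.symm
  set n := p.nbd.length with hn
  have h1 : (ts.getD n []).head? = some p.last := by
    rw [(hheads n).1]; exact wlist_last M s p
  have h2 : (ts.getD n []).getLast? = some q.last := by
    rw [(hheads n).2]
    have := wlist_last M s q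
    rwa [hq] at this
  have hmem : ts.getD n [] ∈ ts := by
    rw [List.getD_eq_getElem?_getD]
    have hlt : n < ts.length := by omega
    rw [List.getElem?_eq_getElem hlt]
    exact List.getElem_mem hlt
  exact chain'_le_head_last M hM _ _ _ (hne _ hmem).2 h1 h2

private lemma urLe_refl (p : UrPath M s) : urLe M s p p := by
  refine ⟨rfl, p.wlist.map (fun w => [w]), by simp [wlist_length], ?_, ?_, ?_, ?_⟩
  · intro t ht
    simp only [List.mem_map] at ht
    obtain ⟨w, _, rfl⟩ := ht
    exact ⟨by simp, List.isChain_singleton w⟩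
  · intro t ht t' ht'
    simp only [List.mem_map] at ht ht'
    obtain ⟨w, _, rfl⟩ := ht
    obtain ⟨w', _, rfl⟩ := ht'
    rfl
  · intro j
    rw [List.getD_eq_getElem?_getD, List.getElem?_map]
    cases h : p.wlist[j]? with
    | none => simp
    | some w => simp
  · have : p.wlist = p.mid :: p.nbd.map Prod.snd := rfl
    rw [this]
    simp

private lemma urLe_of_ptwise {p q : UrPath M s}
    (hfst : p.nbd.map Prod.fst = q.nbd.map Prod.fst)
    (h2 : List.Forall₂ M.le p.wlist q.wlist)
    (hord : q.ord = p.ord ++ [q.mid]) : urLe M s p q := by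
  obtain ⟨hlen, hpt⟩ := List.forall₂_iff_get.mp h2
  refine ⟨hfst, List.zipWith (fun a b => [a, b]) p.wlist q.wlist, ?_, ?_, ?_, ?_, ?_⟩
  · rw [List.length_zipWith, ← hlen, min_self, wlist_length]
  · intro t ht
    obtain ⟨j, hj⟩ := List.mem_iff_getElem?.mp ht
    rw [List.getElem?_zipWith] at hj
    cases hp : p.wlist[j]? with
    | none => rw [hp] at hj; simp at hj
    | some x =>
      cases hq : q.wlist[j]? with
      | none => rw [hp, hq] at hj; simp at hj
      | some y =>
        rw [hp, hq] at hj
        simp only [Option.some.injEq] at hj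
        subst hj
        have hjlt : j < p.wlist.length := by
          by_contra hc
          rw [List.getElem?_eq_none (by omega)] at hp; simp at hp
        have hjlt' : j < q.wlist.length := by omega
        have := hpt j hjlt hjlt'
        rw [List.get_eq_getElem, List.get_eq_getElem] at this
        have hx : p.wlist[j] = x := by
          have := List.getElem?_eq_getElem hjlt ▸ hp; simpa using this
        have hy : q.wlist[j] = y := by
          have := List.getElem?_eq_getElem hjlt' ▸ hq; simpa using this
        rw [hx, hy] at this
        exact ⟨by simp, List.isChain_pair.mpr this⟩
  · intro t ht t' ht'
    obtain ⟨a, b, rfl⟩ := mem_zipWith' ht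
    obtain ⟨a', b', rfl⟩ := mem_zipWith' ht'
    rfl
  · intro j
    rw [List.getD_eq_getElem?_getD, List.getElem?_zipWith]
    cases hp : p.wlist[j]? with
    | none =>
      have : q.wlist[j]? = none := by
        rw [List.getElem?_eq_none_iff] at hp ⊢; omega
      rw [this]; simp [hp, this]
    | some x =>
      have hjlt : j < p.wlist.length := by
        by_contra hc
        rw [List.getElem?_eq_none (by omega)] at hp; simp at hp
      have hjlt' : j < q.wlist.length := by omega
      obtain ⟨y, hq⟩ : ∃ y, q.wlist[j]? = some y :=
        ⟨q.wlist[j], List.getElem?_eq_getElem hjlt'⟩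
      rw [hq]
      simp [hq]
  · rw [hord]
    have hp : p.wlist = p.mid :: p.nbd.map Prod.snd := rfl
    have hq : q.wlist = q.mid :: q.nbd.map Prod.snd := rfl
    rw [hp, hq]
    simp

private lemma chain_lift (hM : M.IsModel) (hcoh : M.Coherent) (l : List (Nbhd W × W)) :
    ∀ (m v : W), NbdChain M m l →
      M.le ((l.map Prod.snd).getLastD m) v →
      ∃ (m' : W) (l' : List (Nbhd W × W)),
        NbdChain M m' l' ∧ l'.map Prod.fst = l.map Prod.fst ∧
        List.Forall₂ M.le (m :: l.map Prod.snd) (m' :: l'.map Prod.snd) ∧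
        (l'.map Prod.snd).getLastD m' = v := by
  induction l using List.reverseRecOn with
  | nil =>
    intro m v _ hle
    exact ⟨v, [], trivial, rfl,
      List.Forall₂.cons (by simpa using hle) List.Forall₂.nil, rfl⟩
  | append_singleton l pr ih =>
    obtain ⟨a, x⟩ := pr
    intro m v hch hle
    rw [nbdChain_concat] at hch
    obtain ⟨hch, haN, hdom, hval⟩ := hch
    have hlast : ((l ++ [(a, x)]).map Prod.snd).getLastD m = x := by simp
    rw [hlast] at hle
    obtain ⟨w', hww', hvw'⟩ := (hcoh a haN).2 hdom x hval v hle
    obtain ⟨m', l', hch', hfst', hf2, hlast'⟩ := ih m w' hch hww'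
    refine ⟨m', l' ++ [(a, v)], ?_, by simp [hfst'], ?_, by simp⟩
    · rw [nbdChain_concat, hlast']
      exact ⟨hch', haN, hM.2.1 a haN hww' hdom, hvw'⟩
    · have e1 : m :: (l ++ [(a, x)]).map Prod.snd = (m :: l.map Prod.snd) ++ [x] := by simp
      have e2 : m' :: (l' ++ [(a, v)]).map Prod.snd = (m' :: l'.map Prod.snd) ++ [v] := by simp
      rw [e1, e2]
      exact List.rel_append hf2 (List.Forall₂.cons hle List.Forall₂.nil)

private lemma mid_eq (p : UrPath M s) : p.mid = p.ord.getLastD s := rfl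

private lemma urPath_lift (hM : M.IsModel) (hcoh : M.Coherent) (p : UrPath M s) (v : W)
    (hv : M.le p.last v) : ∃ q : UrPath M s, urLe M s p q ∧ q.last = v := by
  rw [last_eq] at hv
  obtain ⟨m', l', hch', hfst', hf2, hlast'⟩ :=
    chain_lift M hM hcoh p.nbd p.mid v p.nbd_chain hv
  have hmidle : M.le p.mid m' := by
    rcases hf2 with _ | ⟨h, _⟩
    exact h
  have hordlast : p.ord.getLast? = some p.mid := by
    obtain ⟨z, t, hzt⟩ := List.exists_cons_of_ne_nil p.ord_ne
    rw [mid_eq, hzt]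
    exact getLast?_cons_getLastD z t s
  have hhead : (p.ord ++ [m']).head? = some s := by
    rw [List.head?_append, p.ord_head]; rfl
  have hchain : List.Chain' M.le (p.ord ++ [m']) := by
    refine List.isChain_append.mpr ?_
    refine ⟨p.ord_chain, List.isChain_singleton m', ?_⟩
    intro x hx y hy
    rw [hordlast] at hx
    simp only [List.head?_cons, Option.mem_def, Option.some.injEq] at hx hy
    subst hx; subst hy
    exact hmidle
  have hnbd : NbdChain M ((p.ord ++ [m']).getLastD s) l' := by
    rw [List.getLastD_concat]; exact hch'
  set q : UrPath M s := ⟨p.ord ++ [m'], l', by simp, hhead, hchain, hnbd⟩ with hqdef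
  have hmid : q.mid = m' := by
    rw [mid_eq]; exact List.getLastD_concat
  have hwq : q.wlist = m' :: l'.map Prod.snd := by
    show q.mid :: l'.map Prod.snd = _
    rw [hmid]
  refine ⟨q, ?_, ?_⟩
  · refine urLe_of_ptwise M s hfst'.symm ?_ ?_
    · rw [hwq]; exact hf2
    · show p.ord ++ [m'] = p.ord ++ [q.mid]
      rw [hmid]
  · rw [last_eq, hmid]
    exact hlast'

private lemma urPath_snoc (p : UrPath M s) (a : Nbhd W) (x : W) (haN : a ∈ M.N)
    (hdom : p.last ∈ a.dom) (hx : x ∈ a.val p.last) :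
    ∃ r : UrPath M s, r.ord = p.ord ∧ r.nbd = p.nbd ++ [(a, x)] ∧ r.last = x := by
  rw [last_eq] at hdom hx
  refine ⟨⟨p.ord, p.nbd ++ [(a, x)], p.ord_ne, p.ord_head, p.ord_chain, ?_⟩, rfl, rfl, ?_⟩
  · rw [nbdChain_concat]
    exact ⟨p.nbd_chain, haN, hdom, hx⟩
  · rw [last_eq]
    show ((p.nbd ++ [(a, x)]).map Prod.snd).getLastD _ = x
    simp

private lemma last_of_snoc {r q : UrPath M s} {a : Nbhd W} {x : W}
    (h2 : r.nbd = q.nbd ++ [(a, x)]) : r.last = x := by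
  rw [last_eq, h2]
  simp

end Aux

/-- for a coherent intuitionistic neighbourhood model M and
every unravelling path w⃗ from s, M_s^ur, w⃗ ⊩ φ iff M, last(w⃗) ⊩ φ. -/
theorem unravelling_truth {W : Type} (M : INStruct W) (hM : M.IsModel)
    (hcoh : M.Coherent) (s : W) :
    ∀ (p : UrPath M s) (φ : Formula),
      (urStruct M s).sat φ p ↔ M.sat φ p.last := by
  intro p φ
  induction φ generalizing p with
  | prop i => exact Iff.rfl
  | bot => exact Iff.rfl
  | and φ ψ ihφ ihψ => exact and_congr (ihφ p) (ihψ p)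
  | or φ ψ ihφ ihψ => exact or_congr (ihφ p) (ihψ p)
  | imp φ ψ ihφ ihψ =>
    constructor
    · intro h v hv hφ
      obtain ⟨q, hpq, hq⟩ := urPath_lift M s hM hcoh p v hv
      subst hq
      exact (ihψ q).mp (h q hpq ((ihφ q).mpr hφ))
    · intro h q hpq hφ
      exact (ihψ q).mpr (h q.last (urLe_last_le M s hM hpq) ((ihφ q).mp hφ))
  | box φ ih =>
    constructor
    · rintro ⟨b, ⟨p0, a, haN, hp0dom, rfl⟩, hpdom, hb⟩
      have hpdom' : urLe M s p0 p := hpdom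
      have hplastdom : p.last ∈ a.dom := hM.2.1 a haN (urLe_last_le M s hM hpdom') hp0dom
      refine ⟨a, haN, hplastdom, ?_⟩
      intro w' hw' v hv
      obtain ⟨q, hpq, hq⟩ := urPath_lift M s hM hcoh p w' hw'
      subst hq
      have hqdom : q.last ∈ a.dom := hM.2.1 a haN hw' hplastdom
      obtain ⟨r, hr1, hr2, hr3⟩ := urPath_snoc M s q a v haN hqdom hv
      have hrval : r ∈ (urNbhd M s p0 a).val q := ⟨hr1, v, hv, hr2⟩
      have hsat := hb q hpq r hrval
      rw [ih r, hr3] at hsat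
      exact hsat
    · rintro ⟨a, haN, hdom, hbox⟩
      refine ⟨urNbhd M s p a, ⟨p, a, haN, hdom, rfl⟩, urLe_refl M s p, ?_⟩
      rintro q hpq r ⟨hr1, x, hx, hr2⟩
      rw [ih r, last_of_snoc M s hr2]
      exact hbox q.last (urLe_last_le M s hM hpq) x hx
  | dia φ ih =>
    constructor
    · intro h w' hw' a haN hdom
      obtain ⟨q, hpq, hq⟩ := urPath_lift M s hM hcoh p w' hw'
      subst hq
      obtain ⟨r, ⟨hr1, x, hx, hr2⟩, hsat⟩ :=
        h q hpq (urNbhd M s q a) ⟨q, a, haN, hdom, rfl⟩ (urLe_refl M s q)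
      rw [ih r, last_of_snoc M s hr2] at hsat
      exact ⟨x, hx, hsat⟩
    · rintro h q hpq b ⟨q0, a, haN, hq0dom, rfl⟩ hqdom
      have hqdom' : urLe M s q0 q := hqdom
      have h1 : q.last ∈ a.dom := hM.2.1 a haN (urLe_last_le M s hM hqdom') hq0dom
      obtain ⟨x, hx, hsat⟩ := h q.last (urLe_last_le M s hM hpq) a haN h1
      obtain ⟨r, hr1, hr2, hr3⟩ := urPath_snoc M s q a x haN h1 hx
      refine ⟨r, ⟨hr1, x, hx, hr2⟩, ?_⟩
      rw [ih r, hr3]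
      exact hsat

end IMPaper
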